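/- Every unit disk in the plane is contained in a grid cell of at least one of the four shifted grids G₁, G₂, G₃, G₄, where G₁ has lines {x=4i}, {y=4i}; G₂ has lines {x=4i+2}, {y=4i}; G₃ has lines {x=4i}, {y=4i+2}; G₄ has lines {x=4i+2}, {y=4i+2}, for all i ∈ ℤ. -/

import Mathlib

lemma one_dim_cell (x : ℝ) : ∃ o : ℝ, (o = 0 ∨ o = 2) ∧ ∃ i : ℤ,
    4 * (i : ℝ) + o ≤ x - 1 ∧ x + 1 ≤ 4 * (i : ℝ) + o + 4 := by
  set t := ⌊(x - 1) / 2⌋ with ht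
  have h1 : (2 : ℝ) * t ≤ x - 1 := by
    have := Int.floor_le ((x - 1) / 2); rw [← ht] at this; linarith
  have h2 : x - 1 < 2 * t + 2 := by
    have := Int.lt_floor_add_one ((x - 1) / 2); rw [← ht] at this; linarith
  rcases Int.even_or_odd t with ⟨k, hk⟩ | ⟨k, hk⟩
  · refine ⟨0, Or.inl rfl, k, ?_, ?_⟩ <;>
    · rw [hk] at h1 h2; push_cast at h1 h2 ⊢; linarith
  · refine ⟨2, Or.inr rfl, k, ?_, ?_⟩ <;>
    · rw [hk] at h1 h2; push_cast at h1 h2 ⊢; linarith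

/-- Every unit disk in the plane is contained in a grid cell of at least one of the
four shifted grids with cell side length 4, where the vertical lines are at `x = 4i` or
`x = 4i+2` and the horizontal lines at `y = 4j` or `y = 4j+2`. -/
theorem unit_disk_in_shifted_grid_cell (c : EuclideanSpace ℝ (Fin 2)) :
    ∃ ox oy : ℝ, (ox = 0 ∨ ox = 2) ∧ (oy = 0 ∨ oy = 2) ∧ ∃ i j : ℤ,
      Metric.closedBall c 1 ⊆
        {p : EuclideanSpace ℝ (Fin 2) |
          4 * (i : ℝ) + ox ≤ p 0 ∧ p 0 ≤ 4 * (i : ℝ) + ox + 4 ∧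
          4 * (j : ℝ) + oy ≤ p 1 ∧ p 1 ≤ 4 * (j : ℝ) + oy + 4} := by
  obtain ⟨ox, hox, i, hi1, hi2⟩ := one_dim_cell (c 0)
  obtain ⟨oy, hoy, j, hj1, hj2⟩ := one_dim_cell (c 1)
  refine ⟨ox, oy, hox, hoy, i, j, ?_⟩
  intro p hp
  have hd : dist p c ≤ 1 := Metric.mem_closedBall.mp hp
  have hcoord : ∀ k : Fin 2, |p k - c k| ≤ 1 := by
    intro k
    have h1 : dist (p k) (c k) ≤ dist p c := by
      calc dist (p k) (c k)
          ≤ dist (WithLp.equiv 2 _ p) (WithLp.equiv 2 _ c) := dist_le_pi_dist _ _ k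
        _ ≤ dist p c := by simpa using (PiLp.lipschitzWith_ofLp 2 _).dist_le_mul p c
    rw [Real.dist_eq] at h1; linarith
  have h0 := abs_le.mp (hcoord 0)
  have h1 := abs_le.mp (hcoord 1)
  exact ⟨by linarith [h0.1], by linarith [h0.2], by linarith [h1.1], by linarith [h1.2]⟩
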